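/- Define the Epanechnikov kernel κ(x) = (3/4)(1 - x²) for |x| ≤ 1 and κ(x) = 0 otherwise. Let x₁ ≤ ⋯ ≤ x_{n₁} and y₁ ≤ ⋯ ≤ y_{n₂} be finite samples of positive reals and h₁, h₂ > 0 bandwidths with x₁ - h₁ ≥ 0 and y₁ - h₂ ≥ 0, and let f̂₁(t) = (1/(n₁h₁)) ∑_{i=1}^{n₁} κ((x_i - t)/h₁) and f̂₂(t) = (1/(n₂h₂)) ∑_{j=1}^{n₂} κ((y_j - t)/h₂) be the corresponding kernel density estimators. If x_{n₁} + h₁ < y_{n₂} + h₂, then there exists K ∈ ℕ such that for all k ≥ K, ∫₀^∞ t^k f̂₁(t) dt < ∫₀^∞ t^k f̂₂(t) dt. -/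

import Mathlib

/-- The Epanechnikov kernel `κ(x) = (3/4)(1 - x²)` for `|x| ≤ 1`, and `0` otherwise. -/
noncomputable def epanechnikov (x : ℝ) : ℝ :=
  if |x| ≤ 1 then 3 / 4 * (1 - x ^ 2) else 0

lemma epan_eq_max (x : ℝ) : epanechnikov x = 3 / 4 * max (1 - x ^ 2) 0 := by
  unfold epanechnikov
  rcases le_or_gt |x| 1 with h | h
  · rw [if_pos h, max_eq_left]
    nlinarith [sq_abs x, abs_nonneg x]
  · rw [if_neg (not_le.2 h), max_eq_right, mul_zero]
    nlinarith [sq_abs x, abs_nonneg x]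

lemma epan_nonneg (x : ℝ) : 0 ≤ epanechnikov x := by
  rw [epan_eq_max]; positivity

lemma epan_le (x : ℝ) : epanechnikov x ≤ 3 / 4 := by
  rw [epan_eq_max]
  have : max (1 - x ^ 2) 0 ≤ 1 := max_le (by nlinarith [sq_nonneg x]) one_pos.le
  nlinarith

@[continuity, fun_prop]
lemma epan_cont : Continuous epanechnikov := by
  have : epanechnikov = fun x : ℝ => 3 / 4 * max (1 - x ^ 2) 0 := funext epan_eq_max
  rw [this]
  exact continuous_const.mul ((continuous_const.sub (continuous_pow 2)).max continuous_const)

lemma epan_zero {x : ℝ} (h : 1 ≤ |x|) : epanechnikov x = 0 := by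
  rw [epan_eq_max, max_eq_right, mul_zero]
  nlinarith [sq_abs x, abs_nonneg x]

lemma epan_zero_of_le {h t xi : ℝ} (hh : 0 < h) (ht : t ≤ xi - h) :
    epanechnikov ((xi - t) / h) = 0 :=
  epan_zero (le_abs.2 (Or.inl ((le_div_iff₀ hh).2 (by linarith))))

lemma epan_zero_of_ge {h t xi : ℝ} (hh : 0 < h) (ht : xi + h ≤ t) :
    epanechnikov ((xi - t) / h) = 0 := by
  have h1 : (1:ℝ) ≤ (t - xi) / h := (le_div_iff₀ hh).2 (by linarith)
  have heq : -((xi - t) / h) = (t - xi) / h := by ring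
  exact epan_zero (le_abs.2 (Or.inr (heq ▸ h1)))

lemma epan_lb {u r : ℝ} (h1 : -r ≤ u) (h2 : u ≤ r) :
    3 / 4 * (1 - r ^ 2) ≤ epanechnikov u := by
  rw [epan_eq_max]
  have hu : u ^ 2 ≤ r ^ 2 := by nlinarith
  have : 1 - r ^ 2 ≤ max (1 - u ^ 2) 0 := le_max_of_le_left (by linarith)
  nlinarith

lemma integrable_of_zero_outside (f : ℝ → ℝ) (hf : Continuous f) (a b : ℝ)
    (hz : ∀ t, t ∉ Set.Icc a b → f t = 0) : MeasureTheory.Integrable f :=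
  hf.integrable_of_hasCompactSupport (HasCompactSupport.intro isCompact_Icc hz)

/-- First case of the comparison procedure for Epanechnikov kernel density
estimates: if the support of the estimator `f̂₁` (built from the ordered positive samples
`x₁ ≤ ⋯ ≤ x_{n₁}` with bandwidth `h₁`) ends strictly before that of `f̂₂`
(i.e. `x_{n₁} + h₁ < y_{n₂} + h₂`), then the moments of `f̂₁` are eventually strictly
smaller than those of `f̂₂`, i.e. `f̂₁ ≺ f̂₂`. -/
theorem kde_comparison_shorter_tail_strictly_preferred
    (n₁ n₂ : ℕ) (hn₁ : 0 < n₁) (hn₂ : 0 < n₂)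
    (x : Fin n₁ → ℝ) (y : Fin n₂ → ℝ)
    (hxmono : Monotone x) (hymono : Monotone y)
    (hxpos : ∀ i, 0 < x i) (hypos : ∀ j, 0 < y j)
    (h₁ h₂ : ℝ) (hh₁ : 0 < h₁) (hh₂ : 0 < h₂)
    (hx1 : 0 ≤ x ⟨0, hn₁⟩ - h₁) (hy1 : 0 ≤ y ⟨0, hn₂⟩ - h₂)
    (hmax : x ⟨n₁ - 1, Nat.sub_lt hn₁ one_pos⟩ + h₁ <
            y ⟨n₂ - 1, Nat.sub_lt hn₂ one_pos⟩ + h₂) :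
    ∃ K : ℕ, ∀ k ≥ K,
      (∫ t in Set.Ioi (0:ℝ),
          t ^ k * (1 / ((n₁ : ℝ) * h₁) * ∑ i, epanechnikov ((x i - t) / h₁))) <
      ∫ t in Set.Ioi (0:ℝ),
          t ^ k * (1 / ((n₂ : ℝ) * h₂) * ∑ j, epanechnikov ((y j - t) / h₂)) := by
  classical
  set xM : Fin n₁ := ⟨n₁ - 1, Nat.sub_lt hn₁ one_pos⟩ with hxM
  set yM : Fin n₂ := ⟨n₂ - 1, Nat.sub_lt hn₂ one_pos⟩ with hyM
  set b₁ : ℝ := x xM + h₁ with hb₁def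
  set b₂ : ℝ := y yM + h₂ with hb₂def
  have hxmax : ∀ i, x i ≤ x xM := fun i =>
    hxmono (by rw [Fin.le_def]; exact Nat.le_pred_of_lt i.isLt)
  have hymax : ∀ j, y j ≤ y yM := fun j =>
    hymono (by rw [Fin.le_def]; exact Nat.le_pred_of_lt j.isLt)
  have hxmin : ∀ i, x ⟨0, hn₁⟩ ≤ x i := fun i =>
    hxmono (by rw [Fin.le_def]; exact Nat.zero_le _)
  have hymin : ∀ j, y ⟨0, hn₂⟩ ≤ y j := fun j =>
    hymono (by rw [Fin.le_def]; exact Nat.zero_le _)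
  have hb₁pos : 0 < b₁ := by have := hxpos xM; rw [hb₁def]; linarith
  have hn₁R : (0:ℝ) < (n₁ : ℝ) := Nat.cast_pos.2 hn₁
  have hn₂R : (0:ℝ) < (n₂ : ℝ) := Nat.cast_pos.2 hn₂
  -- zero off support
  have hf₁zero : ∀ t : ℝ, t ≤ 0 ∨ b₁ ≤ t →
      (∑ i : Fin n₁, epanechnikov ((x i - t) / h₁)) = 0 := by
    intro t ht
    apply Finset.sum_eq_zero
    intro i _
    rcases ht with ht | ht
    · exact epan_zero_of_le hh₁ (by linarith [hxmin i])
    · exact epan_zero_of_ge hh₁ (by rw [hb₁def] at ht; linarith [hxmax i])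
  have hf₂zero : ∀ t : ℝ, t ≤ 0 ∨ b₂ ≤ t →
      (∑ j : Fin n₂, epanechnikov ((y j - t) / h₂)) = 0 := by
    intro t ht
    apply Finset.sum_eq_zero
    intro j _
    rcases ht with ht | ht
    · exact epan_zero_of_le hh₂ (by linarith [hymin j])
    · exact epan_zero_of_ge hh₂ (by rw [hb₂def] at ht; linarith [hymax j])
  -- pointwise bounds
  have hf₁nonneg : ∀ t : ℝ,
      0 ≤ 1 / ((n₁ : ℝ) * h₁) * ∑ i, epanechnikov ((x i - t) / h₁) := fun t =>
    mul_nonneg (by positivity) (Finset.sum_nonneg fun i _ => epan_nonneg _)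
  have hf₂nonneg : ∀ t : ℝ,
      0 ≤ 1 / ((n₂ : ℝ) * h₂) * ∑ j, epanechnikov ((y j - t) / h₂) := fun t =>
    mul_nonneg (by positivity) (Finset.sum_nonneg fun j _ => epan_nonneg _)
  have hf₁le : ∀ t : ℝ,
      1 / ((n₁ : ℝ) * h₁) * ∑ i, epanechnikov ((x i - t) / h₁) ≤ 3 / (4 * h₁) := by
    intro t
    have hs : ∑ i : Fin n₁, epanechnikov ((x i - t) / h₁) ≤ (n₁ : ℝ) * (3 / 4) := by
      calc ∑ i : Fin n₁, epanechnikov ((x i - t) / h₁)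
          ≤ ∑ _i : Fin n₁, (3:ℝ)/4 := Finset.sum_le_sum fun i _ => epan_le _
        _ = (n₁ : ℝ) * (3/4) := by
            rw [Finset.sum_const, Finset.card_univ, Fintype.card_fin, nsmul_eq_mul]
    calc 1 / ((n₁ : ℝ) * h₁) * ∑ i, epanechnikov ((x i - t) / h₁)
        ≤ 1 / ((n₁ : ℝ) * h₁) * ((n₁:ℝ) * (3/4)) :=
          mul_le_mul_of_nonneg_left hs (by positivity)
      _ = 3 / (4*h₁) := by field_simp
  -- integrability
  have hint₁ : ∀ k : ℕ, MeasureTheory.Integrable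
      (fun t : ℝ => t ^ k * (1 / ((n₁ : ℝ) * h₁) * ∑ i, epanechnikov ((x i - t) / h₁))) := by
    intro k
    apply integrable_of_zero_outside _ (by fun_prop) 0 b₁
    intro t ht
    rw [Set.mem_Icc, not_and_or] at ht
    have hz : (∑ i : Fin n₁, epanechnikov ((x i - t) / h₁)) = 0 := by
      apply hf₁zero t
      rcases ht with ht | ht
      · left; linarith [not_le.1 ht]
      · right; linarith [not_le.1 ht]
    rw [hz, mul_zero, mul_zero]
  have hint₂ : ∀ k : ℕ, MeasureTheory.Integrable
      (fun t : ℝ => t ^ k * (1 / ((n₂ : ℝ) * h₂) * ∑ j, epanechnikov ((y j - t) / h₂))) := by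
    intro k
    apply integrable_of_zero_outside _ (by fun_prop) 0 b₂
    intro t ht
    rw [Set.mem_Icc, not_and_or] at ht
    have hz : (∑ j : Fin n₂, epanechnikov ((y j - t) / h₂)) = 0 := by
      apply hf₂zero t
      rcases ht with ht | ht
      · left; linarith [not_le.1 ht]
      · right; linarith [not_le.1 ht]
    rw [hz, mul_zero, mul_zero]
  -- upper bound for moment of f₁
  have hub : ∀ k : ℕ,
      (∫ t in Set.Ioi (0:ℝ),
          t ^ k * (1 / ((n₁ : ℝ) * h₁) * ∑ i, epanechnikov ((x i - t) / h₁)))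
        ≤ b₁ ^ k * (3 / (4 * h₁) * b₁) := by
    intro k
    have hsplit : Set.Ioc (0:ℝ) b₁ ∪ Set.Ioi b₁ = Set.Ioi 0 :=
      Set.Ioc_union_Ioi_eq_Ioi hb₁pos.le
    calc (∫ t in Set.Ioi (0:ℝ),
            t ^ k * (1 / ((n₁ : ℝ) * h₁) * ∑ i, epanechnikov ((x i - t) / h₁)))
        = (∫ t in Set.Ioc (0:ℝ) b₁,
            t ^ k * (1 / ((n₁ : ℝ) * h₁) * ∑ i, epanechnikov ((x i - t) / h₁)))
          + ∫ t in Set.Ioi b₁,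
            t ^ k * (1 / ((n₁ : ℝ) * h₁) * ∑ i, epanechnikov ((x i - t) / h₁)) := by
          rw [← MeasureTheory.setIntegral_union (Set.Ioc_disjoint_Ioi le_rfl)
            measurableSet_Ioi ((hint₁ k).integrableOn) ((hint₁ k).integrableOn), hsplit]
      _ = ∫ t in Set.Ioc (0:ℝ) b₁,
            t ^ k * (1 / ((n₁ : ℝ) * h₁) * ∑ i, epanechnikov ((x i - t) / h₁)) := by
          have hzero : (∫ t in Set.Ioi b₁,
              t ^ k * (1 / ((n₁ : ℝ) * h₁) * ∑ i, epanechnikov ((x i - t) / h₁))) = 0 := by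
            apply MeasureTheory.setIntegral_eq_zero_of_forall_eq_zero
            intro t ht
            rw [hf₁zero t (Or.inr (Set.mem_Ioi.1 ht).le), mul_zero, mul_zero]
          rw [hzero, add_zero]
      _ ≤ ∫ _t in Set.Ioc (0:ℝ) b₁, b₁ ^ k * (3 / (4 * h₁)) := by
          apply MeasureTheory.setIntegral_mono_on ((hint₁ k).integrableOn)
            (MeasureTheory.integrableOn_const (by
              rw [Real.volume_Ioc]; exact ENNReal.ofReal_ne_top)) measurableSet_Ioc
          intro t ht
          exact mul_le_mul (pow_le_pow_left₀ ht.1.le ht.2 k) (hf₁le t) (hf₁nonneg t)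
            (by positivity)
      _ = b₁ ^ k * (3 / (4 * h₁) * b₁) := by
          rw [MeasureTheory.setIntegral_const, Real.volume_real_Ioc_of_le (by linarith), smul_eq_mul]
          ring
  -- interval (c, d) in (b₁, b₂) where f₂ is bounded below
  set a : ℝ := max b₁ (y yM - h₂) with hadef
  have hab₂ : a < b₂ := max_lt hmax (by rw [hb₂def]; linarith)
  set c : ℝ := a + (b₂ - a)/3 with hcdef
  set d : ℝ := a + 2*((b₂ - a)/3) with hddef
  have hac : a < c := by rw [hcdef]; linarith
  have hcd : c < d := by rw [hcdef, hddef]; linarith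
  have hdb : d < b₂ := by rw [hddef]; linarith
  have hb₁a : b₁ ≤ a := le_max_left _ _
  have hya : y yM - h₂ ≤ a := le_max_right _ _
  have hcpos : 0 < c := lt_of_lt_of_le hb₁pos (le_trans hb₁a hac.le)
  set r : ℝ := max ((y yM - c)/h₂) ((d - y yM)/h₂) with hrdef
  have hr1 : (y yM - c)/h₂ ≤ r := le_max_left _ _
  have hr2 : (d - y yM)/h₂ ≤ r := le_max_right _ _
  have hrlt1 : r < 1 := by
    apply max_lt
    · rw [div_lt_one hh₂]; linarith
    · rw [div_lt_one hh₂]; rw [hb₂def] at hdb; linarith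
  have hrpos : 0 < r := by
    have : (0:ℝ) < (y yM - c)/h₂ + (d - y yM)/h₂ := by
      have heq : (y yM - c)/h₂ + (d - y yM)/h₂ = (d - c)/h₂ := by ring
      have hdc : (0:ℝ) < d - c := by linarith
      rw [heq]; positivity
    rcases le_or_gt ((y yM - c)/h₂) 0 with h | h
    · exact lt_of_lt_of_le (by linarith) hr2
    · exact lt_of_lt_of_le h hr1
  set ε₀ : ℝ := 3 / 4 * (1 - r ^ 2) with hε₀def
  have hε₀pos : 0 < ε₀ := by rw [hε₀def]; nlinarith
  -- lower bound for moment of f₂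
  have hlb : ∀ k : ℕ,
      c ^ k * (ε₀ / ((n₂:ℝ) * h₂) * (d - c))
        ≤ ∫ t in Set.Ioi (0:ℝ),
            t ^ k * (1 / ((n₂ : ℝ) * h₂) * ∑ j, epanechnikov ((y j - t) / h₂)) := by
    intro k
    have hptwise : ∀ t ∈ Set.Ioc c d,
        c ^ k * (ε₀ / ((n₂:ℝ) * h₂))
          ≤ t ^ k * (1 / ((n₂ : ℝ) * h₂) * ∑ j, epanechnikov ((y j - t) / h₂)) := by
      intro t ht
      have hu1 : (y yM - t)/h₂ ≤ r := by
        refine le_trans ?_ hr1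
        apply div_le_div_of_nonneg_right ?_ hh₂.le <;> linarith [ht.1]
      have hu2 : -r ≤ (y yM - t)/h₂ := by
        have h3 : (t - y yM)/h₂ ≤ (d - y yM)/h₂ := by
          apply div_le_div_of_nonneg_right ?_ hh₂.le <;> linarith [ht.2]
        have h4 : (y yM - t)/h₂ = -((t - y yM)/h₂) := by ring
        rw [h4]
        have := le_trans h3 hr2
        linarith
      have hκ : ε₀ ≤ epanechnikov ((y yM - t)/h₂) := epan_lb hu2 hu1
      have hsum : ε₀ ≤ ∑ j : Fin n₂, epanechnikov ((y j - t) / h₂) := by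
        refine le_trans hκ ?_
        exact Finset.single_le_sum (f := fun j : Fin n₂ => epanechnikov ((y j - t) / h₂))
          (fun j _ => epan_nonneg _) (Finset.mem_univ yM)
      have htk : c ^ k ≤ t ^ k := pow_le_pow_left₀ hcpos.le ht.1.le k
      have hinv : (0:ℝ) < 1 / ((n₂:ℝ) * h₂) := by positivity
      calc c ^ k * (ε₀ / ((n₂:ℝ) * h₂))
          = c ^ k * (1 / ((n₂:ℝ) * h₂) * ε₀) := by ring
        _ ≤ t ^ k * (1 / ((n₂ : ℝ) * h₂) * ∑ j, epanechnikov ((y j - t) / h₂)) := by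
            apply mul_le_mul htk (mul_le_mul_of_nonneg_left hsum hinv.le)
              (mul_nonneg hinv.le hε₀pos.le) (pow_nonneg (le_trans hcpos.le ht.1.le) k)
    calc c ^ k * (ε₀ / ((n₂:ℝ) * h₂) * (d - c))
        = ∫ _t in Set.Ioc c d, c ^ k * (ε₀ / ((n₂:ℝ) * h₂)) := by
          rw [MeasureTheory.setIntegral_const, Real.volume_real_Ioc_of_le (by linarith), smul_eq_mul]
          ring
      _ ≤ ∫ t in Set.Ioc c d,
            t ^ k * (1 / ((n₂ : ℝ) * h₂) * ∑ j, epanechnikov ((y j - t) / h₂)) := by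
          apply MeasureTheory.setIntegral_mono_on
            (MeasureTheory.integrableOn_const (by
              rw [Real.volume_Ioc]; exact ENNReal.ofReal_ne_top))
            ((hint₂ k).integrableOn) measurableSet_Ioc hptwise
      _ ≤ ∫ t in Set.Ioi (0:ℝ),
            t ^ k * (1 / ((n₂ : ℝ) * h₂) * ∑ j, epanechnikov ((y j - t) / h₂)) := by
          apply MeasureTheory.setIntegral_mono_set ((hint₂ k).integrableOn)
          · apply Filter.Eventually.of_forall
            intro t
            simp only [Pi.zero_apply]
            rcases le_or_gt t 0 with ht | ht
            · show (0:ℝ) ≤ t ^ k * (1 / ((n₂:ℝ) * h₂) * ∑ j, epanechnikov ((y j - t) / h₂))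
              rw [hf₂zero t (Or.inl ht), mul_zero, mul_zero]
            · exact mul_nonneg (by positivity) (hf₂nonneg t)
          · exact HasSubset.Subset.eventuallyLE
              (fun t ht => lt_trans hcpos ht.1)
  -- compare the two bounds for large k
  have hbc : b₁ < c := lt_of_le_of_lt hb₁a hac
  have hCpos : (0:ℝ) < 3 / (4 * h₁) * b₁ := by positivity
  have hDpos : (0:ℝ) < ε₀ / ((n₂:ℝ) * h₂) * (d - c) := by
    have : 0 < d - c := by linarith
    positivity
  have hratio : b₁ / c < 1 := (div_lt_one hcpos).2 hbc
  have htend : Filter.Tendsto (fun k : ℕ => (b₁/c)^k * (3 / (4 * h₁) * b₁))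
      Filter.atTop (nhds 0) := by
    have h0 := tendsto_pow_atTop_nhds_zero_of_lt_one (by positivity) hratio
    simpa using h0.mul_const (3 / (4 * h₁) * b₁)
  have hev : ∀ᶠ k : ℕ in Filter.atTop,
      (b₁/c)^k * (3 / (4 * h₁) * b₁) < ε₀ / ((n₂:ℝ) * h₂) * (d - c) :=
    htend.eventually (gt_mem_nhds hDpos)
  obtain ⟨K, hK⟩ := Filter.eventually_atTop.1 hev
  refine ⟨K, fun k hk => ?_⟩
  have h3 : b₁ ^ k * (3 / (4 * h₁) * b₁) < c ^ k * (ε₀ / ((n₂:ℝ) * h₂) * (d - c)) := by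
    have hck : (0:ℝ) < c ^ k := pow_pos hcpos k
    have hb₁k : b₁ ^ k = (b₁/c)^k * c^k := by
      rw [div_pow, div_mul_cancel₀]
      exact ne_of_gt hck
    calc b₁ ^ k * (3 / (4 * h₁) * b₁)
        = ((b₁/c)^k * (3 / (4 * h₁) * b₁)) * c^k := by rw [hb₁k]; ring
      _ < (ε₀ / ((n₂:ℝ) * h₂) * (d - c)) * c^k :=
          mul_lt_mul_of_pos_right (hK k hk) hck
      _ = c ^ k * (ε₀ / ((n₂:ℝ) * h₂) * (d - c)) := mul_comm _ _
  linarith [hub k, hlb k]
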